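/- Limit of big q-Jacobi polynomials to Jacobi polynomials of shifted argument: for real α,β > -1, c,d>0, a nonnegative integer n and real x, lim_{q↑1} P_n(x; q^α, q^β, c, d; q) = R_n^{(α,β)}((2x+d-c)/(c+d)). -/

import Mathlib

open Filter

/-- finite q-shifted factorial `(a;q)_k = ∏_{j=0}^{k-1} (1 - a q^j)` -/
noncomputable def qPoch (q a : ℝ) (k : ℕ) : ℝ := ∏ j ∈ Finset.range k, (1 - a * q ^ j)

lemma aux1 (s : ℝ) :
    Tendsto (fun q : ℝ => (1 - q ^ s) / (1 - q)) (nhdsWithin 1 (Set.Ioo 0 1)) (nhds s) := by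
  have h : HasDerivAt (fun q : ℝ => q ^ s) (s * (1:ℝ) ^ (s - 1)) 1 :=
    Real.hasDerivAt_rpow_const (Or.inl one_ne_zero)
  have h2 := hasDerivAt_iff_tendsto_slope.mp h
  rw [Real.one_rpow, mul_one] at h2
  have h3 : Tendsto (slope (fun q : ℝ => q ^ s) 1) (nhdsWithin 1 (Set.Ioo 0 1)) (nhds s) :=
    h2.mono_left (nhdsWithin_mono 1 (fun y hy => ne_of_lt hy.2))
  refine h3.congr (fun q => ?_)
  rw [slope_def_field, Real.one_rpow]
  rw [← neg_sub (q ^ s) 1, ← neg_sub q 1, neg_div_neg_eq]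

lemma aux2 (t : ℝ) (k : ℕ) :
    Tendsto (fun q : ℝ => qPoch q (q ^ t) k / (1 - q) ^ k) (nhdsWithin 1 (Set.Ioo 0 1))
      (nhds (∏ j ∈ Finset.range k, (t + (j:ℝ)))) := by
  refine Tendsto.congr' ?_ (tendsto_finset_prod _ (fun j _ => aux1 (t + (j:ℝ))))
  filter_upwards [self_mem_nhdsWithin] with q hq
  rw [qPoch, Finset.prod_div_distrib, Finset.prod_const, Finset.card_range]
  congr 1
  refine Finset.prod_congr rfl (fun j _ => ?_)
  rw [Real.rpow_add hq.1, Real.rpow_natCast]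

lemma aux3 (t r : ℝ) (k : ℕ) :
    Tendsto (fun q : ℝ => qPoch q (q ^ t * r) k) (nhdsWithin 1 (Set.Ioo 0 1))
      (nhds ((1 - r) ^ k)) := by
  have hrp : Tendsto (fun q : ℝ => q ^ t) (nhdsWithin 1 (Set.Ioo 0 1)) (nhds 1) := by
    have := (Real.continuousAt_rpow_const 1 t (Or.inl one_ne_zero)).tendsto
    rw [Real.one_rpow] at this
    exact this.mono_left nhdsWithin_le_nhds
  have h : Tendsto (fun q : ℝ => ∏ j ∈ Finset.range k, (1 - q ^ t * r * q ^ j))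
      (nhdsWithin 1 (Set.Ioo 0 1)) (nhds (∏ _j ∈ Finset.range k, (1 - r))) := by
    refine tendsto_finset_prod _ (fun j _ => ?_)
    have hpow : Tendsto (fun q : ℝ => q ^ j) (nhdsWithin 1 (Set.Ioo 0 1)) (nhds 1) := by
      have := (continuous_pow j).tendsto (1 : ℝ)
      rw [one_pow] at this
      exact this.mono_left nhdsWithin_le_nhds
    have hr : Tendsto (fun _ : ℝ => r) (nhdsWithin 1 (Set.Ioo 0 1)) (nhds r) :=
      tendsto_const_nhds
    have h1 : Tendsto (fun _ : ℝ => (1:ℝ)) (nhdsWithin 1 (Set.Ioo 0 1)) (nhds 1) :=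
      tendsto_const_nhds
    have := h1.sub ((hrp.mul hr).mul hpow)
    simpa using this
  rw [Finset.prod_const, Finset.card_range] at h
  exact h

lemma qjDivHelper {p : ℝ} (hp : p ≠ 0) (A B C D E F : ℝ) :
    A / p * (B / p) * C / (D / p * E * (F / p)) = A * B * C / (D * E * F) := by
  by_cases hD : D = 0
  · simp [hD]
  by_cases hE : E = 0
  · simp [hE]
  by_cases hF : F = 0
  · simp [hF]
  field_simp

/-- big q-Jacobi polynomial `P_n(x; q^α, q^β, c, d; q)
= ₃φ₂(q^{-n}, q^{n+1+α+β}, q^{1+α}x/c; q^{1+α}, -q^{1+α}d/c; q, q)`. -/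
noncomputable def bigqJacobiP (q α β c d : ℝ) (n : ℕ) (x : ℝ) : ℝ :=
  ∑ k ∈ Finset.range (n + 1),
    qPoch q (q ^ (-(n : ℤ))) k * qPoch q (q ^ (α + β) * q ^ (n + 1)) k
        * qPoch q (q * q ^ α * x / c) k
      / (qPoch q (q * q ^ α) k * qPoch q (-(q * q ^ α * d / c)) k * qPoch q q k) * q ^ k

/-- Jacobi polynomial `R_n^{(α,β)}(y) = ₂F₁(-n, n+α+β+1; α+1; (1-y)/2)`,
normalized so that `R_n^{(α,β)}(1) = 1`. -/
noncomputable def jacobiR (n : ℕ) (α β : ℝ) (y : ℝ) : ℝ :=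
  ∑ k ∈ Finset.range (n + 1),
    (∏ j ∈ Finset.range k, (-(n : ℝ) + j)) * (∏ j ∈ Finset.range k, ((n : ℝ) + α + β + 1 + j))
      / ((∏ j ∈ Finset.range k, (α + 1 + j)) * (Nat.factorial k)) * ((1 - y) / 2) ^ k

/-- As `q ↑ 1`, the big q-Jacobi polynomial `P_n(x;q^α,q^β,c,d;q)` tends to the
normalized Jacobi polynomial of shifted argument `R_n^{(α,β)}((2x+d-c)/(c+d))`. -/
theorem bigqJacobi_tendsto_jacobi (α β c d : ℝ) (hα : -1 < α) (hβ : -1 < β)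
    (hc : 0 < c) (hd : 0 < d) (n : ℕ) (x : ℝ) :
    Tendsto (fun q : ℝ => bigqJacobiP q α β c d n x)
      (nhdsWithin 1 (Set.Ioo 0 1)) (nhds (jacobiR n α β ((2 * x + d - c) / (c + d)))) := by
  have hcd : (0:ℝ) < c + d := by linarith
  have hbase : (1 - x / c) / (1 - -(d / c)) = (1 - (2 * x + d - c) / (c + d)) / 2 := by
    rw [div_eq_div_iff]
    · field_simp
      ring
    · have : (0:ℝ) < d / c := div_pos hd hc
      linarith
    · norm_num
  have hy : jacobiR n α β ((2 * x + d - c) / (c + d)) =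
      ∑ k ∈ Finset.range (n + 1),
        (∏ j ∈ Finset.range k, (-(n : ℝ) + j)) *
            (∏ j ∈ Finset.range k, (α + β + ((n : ℝ) + 1) + j)) * (1 - x / c) ^ k /
          ((∏ j ∈ Finset.range k, (1 + α + (j:ℝ))) * (1 - -(d / c)) ^ k *
            (∏ j ∈ Finset.range k, (1 + (j:ℝ)))) * 1 := by
    rw [jacobiR]
    refine Finset.sum_congr rfl (fun k _ => ?_)
    rw [show (∏ j ∈ Finset.range k, ((n : ℝ) + α + β + 1 + j)) =
        ∏ j ∈ Finset.range k, (α + β + ((n : ℝ) + 1) + j) from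
      Finset.prod_congr rfl (fun j _ => by ring)]
    rw [show (∏ j ∈ Finset.range k, (α + 1 + (j:ℝ))) =
        ∏ j ∈ Finset.range k, (1 + α + (j:ℝ)) from
      Finset.prod_congr rfl (fun j _ => by ring)]
    rw [show ((Nat.factorial k : ℕ) : ℝ) = ∏ j ∈ Finset.range k, (1 + (j:ℝ)) by
      rw [← Finset.prod_range_add_one_eq_factorial]
      push_cast
      exact Finset.prod_congr rfl (fun j _ => by ring)]
    rw [← hbase, div_pow]
    ring
  rw [hy]
  unfold bigqJacobiP
  refine tendsto_finset_sum _ (fun k _ => ?_)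
  -- per-term
  have p1 : (0:ℝ) < ∏ j ∈ Finset.range k, (1 + α + (j:ℝ)) :=
    Finset.prod_pos (fun j _ => by
      have : (0:ℝ) ≤ (j:ℝ) := Nat.cast_nonneg j
      linarith)
  have p2 : (0:ℝ) < (1 - -(d / c)) ^ k := by
    have h' : (0:ℝ) < d / c := div_pos hd hc
    have : (0:ℝ) < 1 - -(d / c) := by linarith
    exact pow_pos this k
  have p3 : (0:ℝ) < ∏ j ∈ Finset.range k, (1 + (j:ℝ)) :=
    Finset.prod_pos (fun j _ => by
      have : (0:ℝ) ≤ (j:ℝ) := Nat.cast_nonneg j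
      linarith)
  have hne : (∏ j ∈ Finset.range k, (1 + α + (j:ℝ))) * (1 - -(d / c)) ^ k *
      (∏ j ∈ Finset.range k, (1 + (j:ℝ))) ≠ 0 :=
    ne_of_gt (mul_pos (mul_pos p1 p2) p3)
  have Tq : Tendsto (fun q : ℝ => q ^ k) (nhdsWithin 1 (Set.Ioo 0 1)) (nhds 1) := by
    have := (continuous_pow k).tendsto (1:ℝ)
    rw [one_pow] at this
    exact this.mono_left nhdsWithin_le_nhds
  have TA := aux2 (-(n:ℝ)) k
  have TB := aux2 (α + β + ((n:ℝ) + 1)) k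
  have TD := aux2 (1 + α) k
  have TF := aux2 (1:ℝ) k
  have TC := aux3 (1 + α) (x / c) k
  have TE := aux3 (1 + α) (-(d / c)) k
  have Tmain := (((TA.mul TB).mul TC).div ((TD.mul TE).mul TF) hne).mul Tq
  refine Tendsto.congr' ?_ Tmain
  filter_upwards [self_mem_nhdsWithin] with q hq
  obtain ⟨h0, h1⟩ := hq
  have hp : ((1:ℝ) - q) ^ k ≠ 0 := pow_ne_zero _ (sub_ne_zero.mpr (ne_of_gt h1))
  have e1 : q ^ (-(n : ℤ)) = q ^ (-(n:ℝ)) := by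
    rw [← Real.rpow_intCast q (-(n:ℤ))]
    congr 1
    push_cast
    ring
  have e3 : q * q ^ α = q ^ ((1:ℝ) + α) := by
    rw [Real.rpow_add h0, Real.rpow_one]
  have e2 : q ^ (α + β) * q ^ (n + 1) = q ^ (α + β + ((n:ℝ) + 1)) := by
    rw [Real.rpow_add h0 (α + β) ((n:ℝ) + 1)]
    congr 1
    rw [← Real.rpow_natCast q (n + 1)]
    congr 1
    push_cast
    ring
  have e4 : q * q ^ α * x / c = q ^ ((1:ℝ) + α) * (x / c) := by rw [← e3]; ring
  have e5 : -(q * q ^ α * d / c) = q ^ ((1:ℝ) + α) * (-(d / c)) := by rw [← e3]; ring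
  have e6 : q = q ^ ((1:ℝ)) := (Real.rpow_one q).symm
  have e6 : qPoch q q k = qPoch q (q ^ (1:ℝ)) k := by rw [Real.rpow_one]
  rw [e1, e2, e4, e5, e3, e6]
  simp only [Pi.div_apply]
  rw [qjDivHelper hp]
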